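/- For every d ∈ S(f), the union of S(f) ∩ [0,d] and its reflection {d - ℓ : ℓ ∈ S(f) ∩ [0,d]} equals [0,d]. -/

import Mathlib

def chordSet (f : ℝ → ℝ) : Set ℝ :=
  {ℓ | ℓ ∈ Set.Icc (0:ℝ) 1 ∧ ∃ s ∈ Set.Icc (0:ℝ) 1, s + ℓ ∈ Set.Icc (0:ℝ) 1 ∧ f s = f (s + ℓ)}

/-- A continuous nonvanishing function on an interval has constant sign. -/
lemma sign_const {g : ℝ → ℝ} {p q : ℝ} (hpq : p ≤ q)
    (hc : ContinuousOn g (Set.Icc p q)) (hnz : ∀ t ∈ Set.Icc p q, g t ≠ 0) :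
    (∀ t ∈ Set.Icc p q, 0 < g t) ∨ (∀ t ∈ Set.Icc p q, g t < 0) := by
  have hp : p ∈ Set.Icc p q := ⟨le_refl p, hpq⟩
  rcases lt_or_gt_of_ne (hnz p hp) with hneg | hpos
  · right
    intro t ht
    by_contra h
    push_neg at h
    have hpos' : 0 < g t := lt_of_le_of_ne h (Ne.symm (hnz t ht))
    have hsub : Set.Icc p t ⊆ Set.Icc p q := Set.Icc_subset_Icc le_rfl ht.2
    have := intermediate_value_Icc ht.1 (hc.mono hsub)
    have h0 : (0:ℝ) ∈ Set.Icc (g p) (g t) := ⟨le_of_lt hneg, le_of_lt hpos'⟩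
    obtain ⟨u, hu, hgu⟩ := this h0
    exact hnz u (hsub hu) hgu
  · left
    intro t ht
    by_contra h
    push_neg at h
    have hneg' : g t < 0 := lt_of_le_of_ne h (hnz t ht)
    have hsub : Set.Icc p t ⊆ Set.Icc p q := Set.Icc_subset_Icc le_rfl ht.2
    have := intermediate_value_Icc' ht.1 (hc.mono hsub)
    have h0 : (0:ℝ) ∈ Set.Icc (g t) (g p) := ⟨le_of_lt hneg', le_of_lt hpos⟩
    obtain ⟨u, hu, hgu⟩ := this h0
    exact hnz u (hsub hu) hgu

theorem stmt11 (f : ℝ → ℝ) (hf : ContinuousOn f (Set.Icc 0 1))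
    (h0 : f 0 = 0) (h1 : f 1 = 0) (d : ℝ) (hdS : d ∈ chordSet f) :
    (chordSet f ∩ Set.Icc 0 d) ∪ ((fun ℓ => d - ℓ) '' (chordSet f ∩ Set.Icc 0 d))
      = Set.Icc 0 d := by
  obtain ⟨⟨hd0, hd1⟩, s₀, hs₀, hs₀d, hfeq⟩ := hdS
  -- key claim
  have key : ∀ x ∈ Set.Icc (0:ℝ) d, x ∈ chordSet f ∨ (d - x) ∈ chordSet f := by
    intro x hx
    by_contra hcon
    push_neg at hcon
    obtain ⟨hxS, hdxS⟩ := hcon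
    set a := x with ha_def
    set b := d - x with hb_def
    have ha0 : 0 ≤ a := hx.1
    have had : a ≤ d := hx.2
    have hb0 : 0 ≤ b := by simp [hb_def]; linarith
    have hbd : b ≤ d := by simp [hb_def]; linarith
    have hab : a + b = d := by simp [hb_def]; linarith
    have hs0 : (0:ℝ) ≤ s₀ := hs₀.1
    have hs1 : s₀ + d ≤ 1 := hs₀d.2
    -- x not a chord length means f (t + a) ≠ f t everywhere appropriate
    have hxne : ∀ t ∈ Set.Icc (0:ℝ) 1, t + a ∈ Set.Icc (0:ℝ) 1 → f t ≠ f (t + a) := by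
      intro t ht hta heq
      exact hxS ⟨⟨ha0, by linarith [ht.1, hta.2]⟩, t, ht, hta, heq⟩
    have hdxne : ∀ t ∈ Set.Icc (0:ℝ) 1, t + b ∈ Set.Icc (0:ℝ) 1 → f t ≠ f (t + b) := by
      intro t ht htb heq
      exact hdxS ⟨⟨hb0, by linarith [ht.1, htb.2]⟩, t, ht, htb, heq⟩
    -- define g and h
    set g : ℝ → ℝ := fun t => f (t + a) - f t with hg_def
    set gh : ℝ → ℝ := fun t => f (t + b) - f t with hgh_def
    have hmem₁ : ∀ t ∈ Set.Icc s₀ (s₀ + b), t ∈ Set.Icc (0:ℝ) 1 :=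
      fun t ht => ⟨by linarith [ht.1], by linarith [ht.2]⟩
    have hmem₁' : ∀ t ∈ Set.Icc s₀ (s₀ + b), t + a ∈ Set.Icc (0:ℝ) 1 :=
      fun t ht => ⟨by linarith [ht.1], by linarith [ht.2]⟩
    have hmem₂ : ∀ t ∈ Set.Icc s₀ (s₀ + a), t ∈ Set.Icc (0:ℝ) 1 :=
      fun t ht => ⟨by linarith [ht.1], by linarith [ht.2]⟩
    have hmem₂' : ∀ t ∈ Set.Icc s₀ (s₀ + a), t + b ∈ Set.Icc (0:ℝ) 1 :=
      fun t ht => ⟨by linarith [ht.1], by linarith [ht.2]⟩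
    have hgc : ContinuousOn g (Set.Icc s₀ (s₀ + b)) := by
      apply ContinuousOn.sub
      · exact hf.comp ((continuous_id.add continuous_const).continuousOn)
          (fun t ht => hmem₁' t ht)
      · exact hf.mono (fun t ht => hmem₁ t ht)
    have hghc : ContinuousOn gh (Set.Icc s₀ (s₀ + a)) := by
      apply ContinuousOn.sub
      · exact hf.comp ((continuous_id.add continuous_const).continuousOn)
          (fun t ht => hmem₂' t ht)
      · exact hf.mono (fun t ht => hmem₂ t ht)
    have hgnz : ∀ t ∈ Set.Icc s₀ (s₀ + b), g t ≠ 0 := by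
      intro t ht hz
      exact hxne t (hmem₁ t ht) (hmem₁' t ht) ((sub_eq_zero.mp hz).symm)
    have hghnz : ∀ t ∈ Set.Icc s₀ (s₀ + a), gh t ≠ 0 := by
      intro t ht hz
      exact hdxne t (hmem₂ t ht) (hmem₂' t ht) ((sub_eq_zero.mp hz).symm)
    have hbge : s₀ ≤ s₀ + b := by linarith
    have hage : s₀ ≤ s₀ + a := by linarith
    have hgs := sign_const hbge hgc hgnz
    have hghs := sign_const hage hghc hghnz
    -- telescoping identity at endpoints
    have htel : g (s₀ + b) + gh s₀ = 0 := by
      have : s₀ + b + a = s₀ + d := by linarith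
      simp only [hg_def, hgh_def, this]
      rw [← hfeq]; ring
    -- extremum of f on [s₀, s₀ + d]
    have hcompact : IsCompact (Set.Icc s₀ (s₀ + d)) := isCompact_Icc
    have hne : (Set.Icc s₀ (s₀ + d)).Nonempty := ⟨s₀, le_refl _, by linarith⟩
    have hfcont : ContinuousOn f (Set.Icc s₀ (s₀ + d)) :=
      hf.mono (fun t ht => ⟨by linarith [ht.1], by linarith [ht.2]⟩)
    have hsb_mem : s₀ + b ∈ Set.Icc s₀ (s₀ + b) := ⟨hbge, le_refl _⟩
    have hs_mem_a : s₀ ∈ Set.Icc s₀ (s₀ + a) := ⟨le_refl _, hage⟩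
    rcases hgs with hgpos | hgneg
    · rcases hghs with hhpos | hhneg
      · -- both positive: contradicts telescoping
        have := hgpos (s₀ + b) hsb_mem
        have := hhpos s₀ hs_mem_a
        linarith
      · -- g > 0, gh < 0 : use max point
        obtain ⟨t, htmem, htmax⟩ := hcompact.exists_isMaxOn hne hfcont
        rcases le_or_gt t (s₀ + b) with hcase | hcase
        · have hgt := hgpos t ⟨htmem.1, hcase⟩
          have hta : t + a ∈ Set.Icc s₀ (s₀ + d) := ⟨by linarith [htmem.1], by linarith⟩
          have := htmax hta
          simp only [hg_def] at hgt
          have : f (t + a) ≤ f t := htmax hta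
          linarith
        · have htb : t - b ∈ Set.Icc s₀ (s₀ + a) := ⟨by linarith, by linarith [htmem.2]⟩
          have hht := hhneg (t - b) htb
          simp only [hgh_def, sub_add_cancel] at hht
          have htb' : t - b ∈ Set.Icc s₀ (s₀ + d) := ⟨htb.1, by linarith [htb.2]⟩
          have : f (t - b) ≤ f t := htmax htb'
          linarith
    · rcases hghs with hhpos | hhneg
      · -- g < 0, gh > 0 : use min point
        obtain ⟨t, htmem, htmin⟩ := hcompact.exists_isMinOn hne hfcont
        rcases le_or_gt t (s₀ + b) with hcase | hcase
        · have hgt := hgneg t ⟨htmem.1, hcase⟩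
          have hta : t + a ∈ Set.Icc s₀ (s₀ + d) := ⟨by linarith [htmem.1], by linarith⟩
          simp only [hg_def] at hgt
          have : f t ≤ f (t + a) := htmin hta
          linarith
        · have htb : t - b ∈ Set.Icc s₀ (s₀ + a) := ⟨by linarith, by linarith [htmem.2]⟩
          have hht := hhpos (t - b) htb
          simp only [hgh_def, sub_add_cancel] at hht
          have htb' : t - b ∈ Set.Icc s₀ (s₀ + d) := ⟨htb.1, by linarith [htb.2]⟩
          have : f t ≤ f (t - b) := htmin htb'
          linarith
      · -- both negative: contradicts telescoping
        have := hgneg (s₀ + b) hsb_mem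
        have := hhneg s₀ hs_mem_a
        linarith
  -- now finish
  apply Set.eq_of_subset_of_subset
  · rintro x (⟨_, hx⟩ | ⟨ℓ, ⟨_, hℓ⟩, rfl⟩)
    · exact hx
    · exact ⟨by simp only []; linarith [hℓ.2], by simp only []; linarith [hℓ.1]⟩
  · intro x hx
    rcases key x hx with h | h
    · exact Or.inl ⟨h, hx⟩
    · refine Or.inr ⟨d - x, ⟨h, ⟨by linarith [hx.2], by linarith [hx.1]⟩⟩, by ring⟩
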